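/- Let Ω be a measurable space, Y a finite set, ℋ a nonempty family of measurable functions Ω^k → Y, ℓ a metric k-ary loss, μ a probability measure on Ω, and 𝒜 a learning algorithm such that for every F ∈ ℋ, with probability at least 1 − δ over x ∼ μ^{m̃}, the algorithm's output on the sample labeled by F has total loss at most ε/2 from F. Suppose F₁,...,F_{m+1} ∈ ℋ are pairwise at total-loss distance > ε. For x ∈ Ω^{m̃}, let Y(x) be the set of label patterns realizable by ℋ on x and let G(x) be the number of indices i ∈ [m+1] such that every y ∈ Y(x) gives 𝒜(x,y) at total-loss distance > ε/2 from F_i. Then G(x) ≥ m + 1 − |Y(x)| for every x, and ∫ G dμ^{m̃} ≤ (m+1)δ; consequently m + 1 − γ ≤ (m+1)δ where γ = sup_x |Y(x)|, i.e., m ≤ γ/(1−δ) − 1. -/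

import Mathlib

open MeasureTheory
open scoped Classical

theorem stmt13 {Ω H P : Type*} [MeasurableSpace Ω] [Fintype P]
    (μ : Measure Ω) [IsProbabilityMeasure μ] (mt : ℕ)
    (L : H → H → ℝ) (hnn : ∀ a b, 0 ≤ L a b) (hsym : ∀ a b, L a b = L b a)
    (htri : ∀ a b c, L a c ≤ L a b + L b c)
    (Y : (Fin mt → Ω) → Finset P) (𝒜 : (Fin mt → Ω) → P → H)
    (ε δ γ : ℝ) (hδ0 : 0 < δ) (hδ1 : δ < 1)
    (hγ : ∀ x, ((Y x).card : ℝ) ≤ γ)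
    (m : ℕ) (F : Fin (m + 1) → H)
    (hsep : ∀ i j, i ≠ j → ε < L (F i) (F j))
    (lab : Fin (m + 1) → (Fin mt → Ω) → P)
    (hlab : ∀ i x, lab i x ∈ Y x)
    (hPAC : ∀ i, ENNReal.ofReal (1 - δ) ≤
      (Measure.pi fun _ : Fin mt => μ) {x | L (𝒜 x (lab i x)) (F i) ≤ ε / 2})
    (hCmeas : ∀ i : Fin (m + 1),
      MeasurableSet {x : Fin mt → Ω | ∀ y ∈ Y x, ε / 2 < L (𝒜 x y) (F i)}) :
    (∀ x : Fin mt → Ω,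
        (m : ℝ) + 1 - (Y x).card ≤
          ((Finset.univ.filter
              (fun i : Fin (m + 1) => ∀ y ∈ Y x, ε / 2 < L (𝒜 x y) (F i))).card : ℝ)) ∧
    (∫ x, ((Finset.univ.filter
          (fun i : Fin (m + 1) => ∀ y ∈ Y x, ε / 2 < L (𝒜 x y) (F i))).card : ℝ)
        ∂(Measure.pi fun _ : Fin mt => μ) ≤ (m + 1) * δ) ∧
    ((m : ℝ) ≤ γ / (1 - δ) - 1) := by
  set ν : Measure (Fin mt → Ω) := Measure.pi fun _ : Fin mt => μ with hν
  haveI : IsProbabilityMeasure ν := by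
    rw [hν]; infer_instance
  set B : Fin (m + 1) → Set (Fin mt → Ω) :=
    fun i => {x | ∀ y ∈ Y x, ε / 2 < L (𝒜 x y) (F i)} with hB
  -- Part 1
  have part1 : ∀ x : Fin mt → Ω,
      (m : ℝ) + 1 - (Y x).card ≤
        ((Finset.univ.filter
            (fun i : Fin (m + 1) => ∀ y ∈ Y x, ε / 2 < L (𝒜 x y) (F i))).card : ℝ) := by
    intro x
    set p : Fin (m + 1) → Prop := fun i => ∀ y ∈ Y x, ε / 2 < L (𝒜 x y) (F i) with hp
    have hsplit : (Finset.univ.filter p).card + (Finset.univ.filter (fun i => ¬ p i)).card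
        = m + 1 := by
      rw [Finset.card_filter_add_card_filter_not]
      simp
    -- good indices inject into Y x
    have hgood : (Finset.univ.filter (fun i => ¬ p i)).card ≤ (Y x).card := by
      have hch : ∀ i ∈ Finset.univ.filter (fun i => ¬ p i),
          ∃ y ∈ Y x, L (𝒜 x y) (F i) ≤ ε / 2 := by
        intro i hi
        simp only [Finset.mem_filter, hp] at hi
        push_neg at hi
        obtain ⟨y, hy, hle⟩ := hi.2
        exact ⟨y, hy, hle⟩
      choose f hf1 hf2 using hch
      rcases (Finset.univ.filter (fun i => ¬ p i)).eq_empty_or_nonempty with he | ⟨i0, hi0⟩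
      · simp [he]
      haveI : Nonempty P := ⟨f i0 hi0⟩
      apply Finset.card_le_card_of_injOn (fun i => if h : i ∈ Finset.univ.filter (fun i => ¬ p i) then f i h else Classical.arbitrary _)
      · intro i hi
        rw [Finset.mem_coe] at hi
        simp only [hi, dif_pos]
        exact hf1 i hi
      · intro i hi j hj hij
        simp only [Finset.mem_coe] at hi hj
        simp only [hi, hj, dif_pos] at hij
        by_contra hne
        have h1 := hf2 i hi
        have h2 := hf2 j hj
        rw [hij] at h1
        have := htri (F i) (𝒜 x (f j hj)) (F j)
        rw [hsym (F i) (𝒜 x (f j hj))] at this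
        have := hsep i j hne
        linarith
    have hsplitR : ((Finset.univ.filter p).card : ℝ)
        + ((Finset.univ.filter (fun i => ¬ p i)).card : ℝ) = (m : ℝ) + 1 := by
      exact_mod_cast hsplit
    have hgoodR : ((Finset.univ.filter (fun i => ¬ p i)).card : ℝ) ≤ ((Y x).card : ℝ) := by
      exact_mod_cast hgood
    linarith
  -- bound on measure of each bad event
  have hBle : ∀ i, ν (B i) ≤ ENNReal.ofReal δ := by
    intro i
    have hsub : {x | L (𝒜 x (lab i x)) (F i) ≤ ε / 2} ⊆ (B i)ᶜ := by
      intro x hx hxB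
      exact absurd hx (not_le.mpr (hxB (lab i x) (hlab i x)))
    have h1 : ENNReal.ofReal (1 - δ) ≤ ν ((B i)ᶜ) :=
      le_trans (hPAC i) (measure_mono hsub)
    have h2 : ν (B i) = 1 - ν ((B i)ᶜ) := by
      have := prob_compl_eq_one_sub (μ := ν) (hCmeas i).compl
      rwa [compl_compl] at this
    have h3 : (1 : ENNReal) - ENNReal.ofReal (1 - δ) ≤ ENNReal.ofReal δ := by
      rw [tsub_le_iff_right, ← ENNReal.ofReal_add hδ0.le (by linarith)]
      have : δ + (1 - δ) = 1 := by ring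
      rw [this, ENNReal.ofReal_one]
    calc ν (B i) = 1 - ν ((B i)ᶜ) := h2
      _ ≤ 1 - ENNReal.ofReal (1 - δ) := tsub_le_tsub_left h1 1
      _ ≤ ENNReal.ofReal δ := h3
  -- pointwise rewriting as sum of indicators
  have hGeq : ∀ x : Fin mt → Ω,
      ((Finset.univ.filter
          (fun i : Fin (m + 1) => ∀ y ∈ Y x, ε / 2 < L (𝒜 x y) (F i))).card : ℝ)
        = ∑ i : Fin (m + 1), (B i).indicator (fun _ => (1 : ℝ)) x := by
    intro x
    rw [Finset.card_filter]
    push_cast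
    refine Finset.sum_congr rfl fun i _ => ?_
    by_cases h : x ∈ B i
    · have h' : ∀ y ∈ Y x, ε / 2 < L (𝒜 x y) (F i) := h
      rw [Set.indicator_of_mem h, if_pos h']
    · have h' : ¬ ∀ y ∈ Y x, ε / 2 < L (𝒜 x y) (F i) := h
      rw [Set.indicator_of_notMem h, if_neg h']
  have hintsum : Integrable
      (fun x => ∑ i : Fin (m + 1), (B i).indicator (fun _ => (1 : ℝ)) x) ν :=
    integrable_finset_sum _ (fun i _ => (integrable_const (1 : ℝ)).indicator (hCmeas i))
  have hint : Integrable
      (fun x => ((Finset.univ.filter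
          (fun i : Fin (m + 1) => ∀ y ∈ Y x, ε / 2 < L (𝒜 x y) (F i))).card : ℝ)) ν := by
    exact hintsum.congr (Filter.Eventually.of_forall fun x => (hGeq x).symm)
  have part2 : ∫ x, ((Finset.univ.filter
        (fun i : Fin (m + 1) => ∀ y ∈ Y x, ε / 2 < L (𝒜 x y) (F i))).card : ℝ) ∂ν
      ≤ (m + 1) * δ := by
    calc ∫ x, ((Finset.univ.filter
            (fun i : Fin (m + 1) => ∀ y ∈ Y x, ε / 2 < L (𝒜 x y) (F i))).card : ℝ) ∂ν
        = ∫ x, ∑ i : Fin (m + 1), (B i).indicator (fun _ => (1 : ℝ)) x ∂ν := by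
          exact integral_congr_ae (Filter.Eventually.of_forall hGeq)
      _ = ∑ i : Fin (m + 1), ∫ x, (B i).indicator (fun _ => (1 : ℝ)) x ∂ν :=
          integral_finset_sum _ (fun i _ => (integrable_const (1 : ℝ)).indicator (hCmeas i))
      _ = ∑ i : Fin (m + 1), (ν (B i)).toReal := by
          refine Finset.sum_congr rfl fun i _ => ?_
          rw [integral_indicator_const (1 : ℝ) (hCmeas i), smul_eq_mul, mul_one]
          rfl
      _ ≤ ∑ _i : Fin (m + 1), δ := by
          refine Finset.sum_le_sum fun i _ => ?_
          have := ENNReal.toReal_mono ENNReal.ofReal_ne_top (hBle i)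
          rwa [ENNReal.toReal_ofReal hδ0.le] at this
      _ = (m + 1) * δ := by
          rw [Finset.sum_const, Finset.card_univ, Fintype.card_fin, nsmul_eq_mul]
          push_cast; ring
  refine ⟨part1, part2, ?_⟩
  have hmono : (m : ℝ) + 1 - γ ≤ ∫ x, ((Finset.univ.filter
        (fun i : Fin (m + 1) => ∀ y ∈ Y x, ε / 2 < L (𝒜 x y) (F i))).card : ℝ) ∂ν := by
    have h := integral_mono (integrable_const ((m : ℝ) + 1 - γ)) hint
      (fun x => by have := part1 x; have := hγ x; linarith)
    rwa [integral_const, probReal_univ, one_smul] at h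
  have hkey : ((m : ℝ) + 1) * (1 - δ) ≤ γ := by nlinarith [hmono.trans part2]
  have hpos : (0 : ℝ) < 1 - δ := by linarith
  have : (m : ℝ) + 1 ≤ γ / (1 - δ) := (le_div_iff₀ hpos).mpr hkey
  linarith
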